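/- arXiv:2311.17327 — 2 statements merged into one kernel-verified Lean document; each statement's English description precedes it below -/
import Mathlib

section
/- For every i with 1 ≤ i ≤ M, the total topological distance contrastive loss L(w) = (1/M) Σ_{j=1}^{M} ℓ_j(w), viewed as a function of w_i with all other vectors held fixed, is differentiable at w_i, and its gradient equals (1/M) · ( Σ_{j=1}^{i} exp(⟨z, w_i⟩/τ) / Σ_{k=j}^{M} exp(⟨z, w_k⟩/τ) − 1 ) · (z/τ). -/
/-- The per-term topological distance contrastive loss:
`ℓ_j(w) = −log( exp(⟨z, w_j⟩/τ) / Σ_{k=j}^{M} exp(⟨z, w_k⟩/τ) )`. -/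
noncomputable def tdlPerTermLoss {d M : ℕ} (τ : ℝ) (z : EuclideanSpace ℝ (Fin d))
    (w : Fin M → EuclideanSpace ℝ (Fin d)) (j : Fin M) : ℝ :=
  - Real.log (Real.exp ((inner ℝ z (w j) : ℝ) / τ) /
      ∑ k ∈ Finset.Ici j, Real.exp ((inner ℝ z (w k) : ℝ) / τ))

/-- The total topological distance contrastive loss `L(w) = (1/M) Σ_{j=1}^{M} ℓ_j(w)`. -/
noncomputable def tdlTotalLoss {d M : ℕ} (τ : ℝ) (z : EuclideanSpace ℝ (Fin d))
    (w : Fin M → EuclideanSpace ℝ (Fin d)) : ℝ :=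
  (M : ℝ)⁻¹ * ∑ j : Fin M, tdlPerTermLoss τ z w j

/-- For every `i`, the total loss `L`, viewed as a function of `w_i` with all other
vectors held fixed, is differentiable at `w_i`, and its gradient equals
`(1/M) · ( Σ_{j=1}^{i} exp(⟨z, w_i⟩/τ) / Σ_{k=j}^{M} exp(⟨z, w_k⟩/τ) − 1 ) · (z/τ)`. -/
theorem tdl_total_grad {d M : ℕ} (hd : 1 ≤ d) (hM : 1 ≤ M)
    (τ : ℝ) (hτ : 0 < τ) (z : EuclideanSpace ℝ (Fin d))
    (w : Fin M → EuclideanSpace ℝ (Fin d)) (i : Fin M) :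
    DifferentiableAt ℝ (fun v => tdlTotalLoss τ z (Function.update w i v)) (w i) ∧
    gradient (fun v => tdlTotalLoss τ z (Function.update w i v)) (w i) =
      ((M : ℝ)⁻¹ *
        (∑ j ∈ Finset.Iic i,
            Real.exp ((inner ℝ z (w i) : ℝ) / τ) /
              (∑ k ∈ Finset.Ici j, Real.exp ((inner ℝ z (w k) : ℝ) / τ)) - 1)) •
        (τ⁻¹ • z) := by
  classical
  set x := w i with hx
  set E : EuclideanSpace ℝ (Fin d) → ℝ := fun v => Real.exp ((inner ℝ z v : ℝ) / τ) with hE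
  set S : Fin M → ℝ := fun j => ∑ k ∈ Finset.Ici j, E (w k) with hS
  have hSpos : ∀ j, 0 < S j := fun j =>
    Finset.sum_pos (fun k _ => Real.exp_pos _) ⟨j, Finset.mem_Ici.mpr le_rfl⟩
  set Dc : EuclideanSpace ℝ (Fin d) →L[ℝ] ℝ := τ⁻¹ • innerSL ℝ z with hDc
  have hc : HasFDerivAt (fun v : EuclideanSpace ℝ (Fin d) => (inner ℝ z v : ℝ) / τ) Dc x := by
    have := (innerSL ℝ z).hasFDerivAt (x := x)
    simpa [div_eq_inv_mul, hDc] using this.const_mul τ⁻¹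
  -- derivative of each summand in S_j as a function of v
  have hterm : ∀ k : Fin M, HasFDerivAt
      (fun v => Real.exp ((inner ℝ z (Function.update w i v k) : ℝ) / τ))
      ((if k = i then E x else 0) • Dc) x := by
    intro k
    by_cases hk : k = i
    · subst hk
      have : HasFDerivAt (fun v : EuclideanSpace ℝ (Fin d) => E v) (E x • Dc) x := hc.exp
      simpa [Function.update_self, hE] using this
    · simpa [Function.update_of_ne hk, hk] using
        (hasFDerivAt_const (Real.exp ((inner ℝ z (w k) : ℝ) / τ)) x)
  -- derivative of S_j(v)
  have hSsum : ∀ j : Fin M, HasFDerivAt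
      (fun v => ∑ k ∈ Finset.Ici j, Real.exp ((inner ℝ z (Function.update w i v k) : ℝ) / τ))
      ((if j ≤ i then E x else 0) • Dc) x := by
    intro j
    have h := HasFDerivAt.fun_sum (fun k (_ : k ∈ Finset.Ici j) => hterm k)
    have hsum : (∑ k ∈ Finset.Ici j, (if k = i then E x else 0) • Dc)
        = (if j ≤ i then E x else 0) • Dc := by
      rw [← Finset.sum_smul]
      congr 1
      rw [Finset.sum_ite_eq' (Finset.Ici j) i (fun _ => E x)]
      simp [Finset.mem_Ici]
    rwa [hsum] at h
  -- value of S_j(v) at x is S j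
  have hSval : ∀ j : Fin M,
      (∑ k ∈ Finset.Ici j, Real.exp ((inner ℝ z (Function.update w i x k) : ℝ) / τ)) = S j := by
    intro j; simp [hS, hE, hx, Function.update_eq_self]
  -- per-term loss derivative
  have hper : ∀ j : Fin M, HasFDerivAt
      (fun v => tdlPerTermLoss τ z (Function.update w i v) j)
      (((if j ≤ i then E x / S j else 0) - (if j = i then (1:ℝ) else 0)) • Dc) x := by
    intro j
    have hrw : (fun v => tdlPerTermLoss τ z (Function.update w i v) j)
        = fun v => Real.log (∑ k ∈ Finset.Ici j,
            Real.exp ((inner ℝ z (Function.update w i v k) : ℝ) / τ))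
          - (inner ℝ z (Function.update w i v j) : ℝ) / τ := by
      funext v
      have hpos : 0 < ∑ k ∈ Finset.Ici j,
          Real.exp ((inner ℝ z (Function.update w i v k) : ℝ) / τ) :=
        Finset.sum_pos (fun k _ => Real.exp_pos _) ⟨j, Finset.mem_Ici.mpr le_rfl⟩
      rw [tdlPerTermLoss, Real.log_div (Real.exp_ne_zero _) hpos.ne', Real.log_exp, neg_sub]
    rw [hrw]
    -- log part
    have hlog : HasFDerivAt
        (fun v => Real.log (∑ k ∈ Finset.Ici j,
            Real.exp ((inner ℝ z (Function.update w i v k) : ℝ) / τ)))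
        ((if j ≤ i then E x / S j else 0) • Dc) x := by
      have h := (hSsum j).log (by rw [hSval j]; exact (hSpos j).ne')
      have : (∑ k ∈ Finset.Ici j, Real.exp ((inner ℝ z (Function.update w i x k) : ℝ) / τ))⁻¹
          • ((if j ≤ i then E x else 0) • Dc)
          = (if j ≤ i then E x / S j else 0) • Dc := by
        rw [hSval j, smul_smul]
        congr 1
        by_cases hji : j ≤ i <;> simp [hji, div_eq_inv_mul]
      rwa [this] at h
    -- inner part
    have hinner : HasFDerivAt
        (fun v => (inner ℝ z (Function.update w i v j) : ℝ) / τ)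
        ((if j = i then (1:ℝ) else 0) • Dc) x := by
      by_cases hj : j = i
      · subst hj; simpa [Function.update_self] using hc
      · simpa [Function.update_of_ne hj, hj] using
          (hasFDerivAt_const ((inner ℝ z (w j) : ℝ) / τ) x)
    have h := hlog.sub hinner
    rwa [← sub_smul] at h
  -- total loss derivative
  set a : ℝ := (M : ℝ)⁻¹ * (∑ j ∈ Finset.Iic i, E x / S j - 1) with ha
  have htot : HasFDerivAt (fun v => tdlTotalLoss τ z (Function.update w i v)) (a • Dc) x := by
    have hrw : (fun v => tdlTotalLoss τ z (Function.update w i v))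
        = fun v => (M : ℝ)⁻¹ * ∑ j : Fin M, tdlPerTermLoss τ z (Function.update w i v) j := by
      funext v; rfl
    rw [hrw]
    have h := (HasFDerivAt.fun_sum (fun j (_ : j ∈ Finset.univ) => hper j)).const_mul (M : ℝ)⁻¹
    have hsum : (M : ℝ)⁻¹ • (∑ j : Fin M,
        ((if j ≤ i then E x / S j else 0) - (if j = i then (1:ℝ) else 0)) • Dc) = a • Dc := by
      rw [← Finset.sum_smul, smul_smul]
      congr 1
      rw [ha]
      congr 1
      rw [Finset.sum_sub_distrib]
      congr 1
      · rw [← Finset.sum_filter]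
        congr 1
        ext j; simp [Finset.mem_Iic]
      · simp
    rwa [hsum] at h
  -- convert to gradient
  have hgrad : HasGradientAt (fun v => tdlTotalLoss τ z (Function.update w i v))
      (a • (τ⁻¹ • z)) x := by
    rw [hasGradientAt_iff_hasFDerivAt]
    refine htot.congr_fderiv ?_
    ext v
    simp [InnerProductSpace.toDual_apply_apply, hDc, real_inner_smul_left, mul_comm]
  refine ⟨hgrad.hasFDerivAt.differentiableAt, ?_⟩
  rw [hgrad.gradient]
end

section
/- Suppose M ≥ 2. Then the gradient of the total topological distance contrastive loss L with respect to the topologically farthest sample w_M (all other vectors held fixed) points in the direction of z: there exists a real number c > 0 such that ∇_{w_M} L(w) = c · z. Explicitly, ∇_{w_M} L(w) = (1/M) · ( Σ_{j=1}^{M−1} exp(⟨z, w_M⟩/τ) / Σ_{k=j}^{M} exp(⟨z, w_k⟩/τ) ) · (z/τ), and the scalar factor (1/(Mτ)) · Σ_{j=1}^{M−1} exp(⟨z, w_M⟩/τ) / Σ_{k=j}^{M} exp(⟨z, w_k⟩/τ) is strictly positive. -/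
section Aux

variable {d M : ℕ} (τ : ℝ) (z : EuclideanSpace ℝ (Fin d))

/-- Key gradient computation, with the maximal index abstracted. -/
lemma tdl_hasGradientAt (hτ : 0 < τ) (w : Fin M → EuclideanSpace ℝ (Fin d))
    (m : Fin M) (htop : ∀ k, k ≤ m) :
    HasGradientAt (fun v => tdlTotalLoss τ z (Function.update w m v))
      (((M : ℝ)⁻¹ *
        (∑ j ∈ Finset.Iio m,
            Real.exp ((inner ℝ z (w m) : ℝ) / τ) /
              (∑ k ∈ Finset.Ici j, Real.exp ((inner ℝ z (w k) : ℝ) / τ)))) • (τ⁻¹ • z))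
      (w m) := by
  classical
  set z' : EuclideanSpace ℝ (Fin d) := τ⁻¹ • z with hz'
  have hinner : ∀ v : EuclideanSpace ℝ (Fin d),
      (inner ℝ z' v : ℝ) = (inner ℝ z v : ℝ) / τ := by
    intro v
    rw [hz', real_inner_smul_left, div_eq_inv_mul]
  set C : Fin M → ℝ := fun j => ∑ k ∈ (Finset.Ici j).erase m,
    Real.exp ((inner ℝ z (w k) : ℝ) / τ) with hC
  have hCnonneg : ∀ j, 0 ≤ C j := fun j =>
    Finset.sum_nonneg fun k _ => (Real.exp_pos _).le
  have hmIci : ∀ j : Fin M, m ∈ Finset.Ici j := fun j => Finset.mem_Ici.2 (htop j)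
  -- the denominator sum splits
  have hsplit : ∀ (v : EuclideanSpace ℝ (Fin d)) (j : Fin M),
      (∑ k ∈ Finset.Ici j,
        Real.exp ((inner ℝ z (Function.update w m v k) : ℝ) / τ)) =
        Real.exp ((inner ℝ z v : ℝ) / τ) + C j := by
    intro v j
    rw [← Finset.add_sum_erase _ _ (hmIci j), Function.update_self]
    congr 1
    refine Finset.sum_congr rfl fun k hk => ?_
    rw [Function.update_of_ne (Finset.ne_of_mem_erase hk)]
  have huniv : (Finset.univ : Finset (Fin M)) = insert m (Finset.Iio m) := by
    ext k
    simp only [Finset.mem_univ, Finset.mem_insert, Finset.mem_Iio, true_iff]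
    rcases eq_or_ne k m with h | h
    · exact Or.inl h
    · exact Or.inr (lt_of_le_of_ne (htop k) h)
  have hIcim : Finset.Ici m = {m} := by
    ext k
    simp only [Finset.mem_Ici, Finset.mem_singleton]
    exact ⟨fun h => le_antisymm (htop k) h, fun h => h ▸ le_rfl⟩
  -- rewrite the loss function
  have hfun : (fun v => tdlTotalLoss τ z (Function.update w m v)) =
      fun v => (M : ℝ)⁻¹ * ∑ j ∈ Finset.Iio m,
        (Real.log (Real.exp ((inner ℝ z' v : ℝ)) + C j) - (inner ℝ z (w j) : ℝ) / τ) := by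
    funext v
    unfold tdlTotalLoss tdlPerTermLoss
    congr 1
    rw [huniv, Finset.sum_insert (by simp)]
    have hm0 : - Real.log (Real.exp ((inner ℝ z (Function.update w m v m) : ℝ) / τ) /
        ∑ k ∈ Finset.Ici m,
          Real.exp ((inner ℝ z (Function.update w m v k) : ℝ) / τ)) = 0 := by
      rw [hIcim, Finset.sum_singleton, div_self (Real.exp_ne_zero _), Real.log_one, neg_zero]
    rw [hm0, zero_add]
    refine Finset.sum_congr rfl fun j hj => ?_
    have hjm : j ≠ m := ne_of_lt (Finset.mem_Iio.1 hj)
    have hpos : 0 < Real.exp ((inner ℝ z v : ℝ) / τ) + C j :=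
      lt_of_lt_of_le (Real.exp_pos _) (le_add_of_nonneg_right (hCnonneg j))
    rw [hsplit v j, Function.update_of_ne hjm, Real.log_div (Real.exp_ne_zero _) hpos.ne',
      Real.log_exp, neg_sub, hinner]
  rw [hfun]
  -- set up the derivative
  set x := w m with hx
  set E : ℝ := Real.exp ((inner ℝ z' x : ℝ)) with hE
  have hSx : ∀ j : Fin M, E + C j =
      ∑ k ∈ Finset.Ici j, Real.exp ((inner ℝ z (w k) : ℝ) / τ) := by
    intro j
    have := hsplit x j
    rw [Function.update_eq_self] at this
    rw [hE, hinner, ← this]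
  have hD : HasFDerivAt
      (fun v => (M : ℝ)⁻¹ * ∑ j ∈ Finset.Iio m,
        (Real.log (Real.exp ((inner ℝ z' v : ℝ)) + C j) - (inner ℝ z (w j) : ℝ) / τ))
      ((M : ℝ)⁻¹ • ∑ j ∈ Finset.Iio m,
        ((E + C j)⁻¹ • (E • (innerSL ℝ z' : EuclideanSpace ℝ (Fin d) →L[ℝ] ℝ)))) x := by
    refine HasFDerivAt.const_mul (HasFDerivAt.fun_sum fun j _ => ?_) _
    have hpos : Real.exp ((inner ℝ z' x : ℝ)) + C j ≠ 0 :=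
      (lt_of_lt_of_le (Real.exp_pos _) (le_add_of_nonneg_right (hCnonneg j))).ne'
    have hbase : HasFDerivAt (fun v : EuclideanSpace ℝ (Fin d) => (inner ℝ z' v : ℝ))
        (innerSL ℝ z') x := (innerSL ℝ z').hasFDerivAt
    exact ((hbase.exp.add_const (C j)).log hpos).sub_const _
  have hSne : ∀ j : Fin M, (E + C j) ≠ 0 := fun j =>
    (lt_of_lt_of_le (Real.exp_pos _) (le_add_of_nonneg_right (hCnonneg j))).ne'
  have hEE : E = Real.exp ((inner ℝ z x : ℝ) / τ) := by rw [hE, hinner]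
  have hEq : (InnerProductSpace.toDual ℝ (EuclideanSpace ℝ (Fin d)))
      (((M : ℝ)⁻¹ *
        (∑ j ∈ Finset.Iio m,
            Real.exp ((inner ℝ z x : ℝ) / τ) /
              (∑ k ∈ Finset.Ici j, Real.exp ((inner ℝ z (w k) : ℝ) / τ)))) • (τ⁻¹ • z)) =
      ((M : ℝ)⁻¹ • ∑ j ∈ Finset.Iio m,
        ((E + C j)⁻¹ • (E • (innerSL ℝ z' : EuclideanSpace ℝ (Fin d) →L[ℝ] ℝ)))) := by
    ext y
    simp only [InnerProductSpace.toDual_apply_apply, ContinuousLinearMap.smul_apply,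
      ContinuousLinearMap.sum_apply, innerSL_apply_apply, smul_eq_mul]
    rw [real_inner_smul_left, real_inner_smul_left, mul_assoc,
      Finset.sum_mul, Finset.mul_sum, Finset.mul_sum]
    refine Finset.sum_congr rfl fun j _ => ?_
    rw [← hSx j, ← hEE]
    field_simp
  rw [hasGradientAt_iff_hasFDerivAt, hEq]
  exact hD

end Aux

/-- For `M ≥ 2`, the gradient of the total loss `L` with respect to the topologically
farthest sample `w_M` points in the direction of `z`: there is `c > 0` with
`∇_{w_M} L(w) = c • z`.  Explicitly,
`∇_{w_M} L(w) = (1/M) · ( Σ_{j=1}^{M−1} exp(⟨z, w_M⟩/τ) / Σ_{k=j}^{M} exp(⟨z, w_k⟩/τ) ) · (z/τ)`,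
and the scalar factor
`(1/(Mτ)) · Σ_{j=1}^{M−1} exp(⟨z, w_M⟩/τ) / Σ_{k=j}^{M} exp(⟨z, w_k⟩/τ)` is strictly
positive. -/
theorem tdl_total_grad_farthest {d M : ℕ} (hd : 1 ≤ d) (hM : 2 ≤ M)
    (τ : ℝ) (hτ : 0 < τ) (z : EuclideanSpace ℝ (Fin d))
    (w : Fin M → EuclideanSpace ℝ (Fin d)) :
    (∃ c : ℝ, 0 < c ∧
      gradient (fun v => tdlTotalLoss τ z (Function.update w ⟨M - 1, by omega⟩ v))
          (w ⟨M - 1, by omega⟩) = c • z) ∧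
    gradient (fun v => tdlTotalLoss τ z (Function.update w ⟨M - 1, by omega⟩ v))
        (w ⟨M - 1, by omega⟩) =
      ((M : ℝ)⁻¹ *
        (∑ j ∈ Finset.Iio (⟨M - 1, by omega⟩ : Fin M),
            Real.exp ((inner ℝ z (w ⟨M - 1, by omega⟩) : ℝ) / τ) /
              (∑ k ∈ Finset.Ici j, Real.exp ((inner ℝ z (w k) : ℝ) / τ)))) • (τ⁻¹ • z) ∧
    0 < (1 / ((M : ℝ) * τ)) *
        (∑ j ∈ Finset.Iio (⟨M - 1, by omega⟩ : Fin M),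
            Real.exp ((inner ℝ z (w ⟨M - 1, by omega⟩) : ℝ) / τ) /
              (∑ k ∈ Finset.Ici j, Real.exp ((inner ℝ z (w k) : ℝ) / τ))) := by
  have hMpos : (0 : ℝ) < M := by exact_mod_cast (by omega : 0 < M)
  set m : Fin M := ⟨M - 1, by omega⟩ with hm
  have htop : ∀ k : Fin M, k ≤ m := by
    intro k
    rw [Fin.le_def]
    have := k.2
    simp only [hm]
    omega
  have hgrad := tdl_hasGradientAt τ z hτ w m htop
  have hgradeq := hgrad.gradient
  set Sgen : ℝ := ∑ j ∈ Finset.Iio m,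
      Real.exp ((inner ℝ z (w m) : ℝ) / τ) /
        (∑ k ∈ Finset.Ici j, Real.exp ((inner ℝ z (w k) : ℝ) / τ)) with hS
  have hSpos : 0 < Sgen := by
    refine Finset.sum_pos (fun j _ => ?_) ?_
    · refine div_pos (Real.exp_pos _) (Finset.sum_pos (fun k _ => Real.exp_pos _) ?_)
      exact ⟨j, Finset.mem_Ici.2 le_rfl⟩
    · refine ⟨⟨0, by omega⟩, Finset.mem_Iio.2 ?_⟩
      rw [Fin.lt_def]
      simp only [hm]
      omega
  refine ⟨⟨(M : ℝ)⁻¹ * Sgen * τ⁻¹, ?_, ?_⟩, ?_, ?_⟩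
  · exact mul_pos (mul_pos (inv_pos.2 hMpos) hSpos) (inv_pos.2 hτ)
  · rw [hgradeq, smul_smul]
  · exact hgradeq
  · rw [one_div]
    exact mul_pos (inv_pos.2 (mul_pos hMpos hτ)) hSpos
end
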